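/- Let n ≥ 2 be an integer and s ∈ (0,1). Let u₁, u₂ : (0,∞) → ℝ be continuous and each pointwise s-harmonic: for every r > 0 and i = 1,2, the function τ ↦ [u_i(r) − u_i(rτ) + (u_i(r) − u_i(r/τ)) τ^{2s−n}] · τ (τ²−1)^{−1−2s} H(τ) is Lebesgue integrable on (1,∞) with integral 0. If u₁(r) ≥ u₂(r) for all r > 0 and u₁(r̄) = u₂(r̄) for some r̄ > 0, then u₁ ≡ u₂ on (0,∞). -/
import Mathlib


open MeasureTheory

/-- The kernel `H(τ)` from the radial representation of the fractional Laplacian. -/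
noncomputable def Hker (n : ℕ) (s τ : ℝ) : ℝ :=
  2 * Real.pi * (Real.pi ^ (((n : ℝ) - 3) / 2) / Real.Gamma (((n : ℝ) - 1) / 2)) *
    ∫ θ in (0:ℝ)..Real.pi,
      Real.sin θ ^ (n - 2) *
        ((Real.sqrt (τ ^ 2 - Real.sin θ ^ 2) + Real.cos θ) ^ (1 + 2 * s) /
          Real.sqrt (τ ^ 2 - Real.sin θ ^ 2))

lemma Hker_pos (n : ℕ) (hn : 2 ≤ n) (s : ℝ) {τ : ℝ} (hτ : 1 < τ) :
    0 < Hker n s τ := by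
  have hτ2 : ∀ θ : ℝ, (0:ℝ) < τ ^ 2 - Real.sin θ ^ 2 := fun θ => by
    nlinarith [Real.neg_one_le_sin θ, Real.sin_le_one θ]
  have hbase : ∀ θ : ℝ, 0 < Real.sqrt (τ ^ 2 - Real.sin θ ^ 2) + Real.cos θ := by
    intro θ
    have h1 : Real.sqrt (Real.cos θ ^ 2) < Real.sqrt (τ ^ 2 - Real.sin θ ^ 2) :=
      Real.sqrt_lt_sqrt (sq_nonneg _) (by nlinarith [Real.sin_sq_add_cos_sq θ])
    rw [Real.sqrt_sq_eq_abs] at h1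
    have := neg_abs_le (Real.cos θ)
    linarith
  have hc : Continuous (fun θ : ℝ => Real.sin θ ^ (n - 2) *
      ((Real.sqrt (τ ^ 2 - Real.sin θ ^ 2) + Real.cos θ) ^ (1 + 2 * s) /
        Real.sqrt (τ ^ 2 - Real.sin θ ^ 2))) := by
    apply Continuous.mul (Real.continuous_sin.pow _)
    apply Continuous.div
    · apply Continuous.rpow_const
      · exact ((continuous_const.sub (Real.continuous_sin.pow 2)).sqrt).add Real.continuous_cos
      · intro x; exact Or.inl (ne_of_gt (hbase x))
    · exact (continuous_const.sub (Real.continuous_sin.pow 2)).sqrt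
    · intro x; exact ne_of_gt (Real.sqrt_pos.mpr (hτ2 x))
  have hintpos : 0 < ∫ θ in (0:ℝ)..Real.pi,
      Real.sin θ ^ (n - 2) *
        ((Real.sqrt (τ ^ 2 - Real.sin θ ^ 2) + Real.cos θ) ^ (1 + 2 * s) /
          Real.sqrt (τ ^ 2 - Real.sin θ ^ 2)) := by
    apply intervalIntegral.intervalIntegral_pos_of_pos_on (hc.intervalIntegrable _ _) _ Real.pi_pos
    intro x hx
    have hsin : 0 < Real.sin x := Real.sin_pos_of_pos_of_lt_pi hx.1 hx.2
    have h1 : 0 < (Real.sqrt (τ ^ 2 - Real.sin x ^ 2) + Real.cos x) ^ (1 + 2 * s) :=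
      Real.rpow_pos_of_pos (hbase x) _
    have h2 : 0 < Real.sqrt (τ ^ 2 - Real.sin x ^ 2) := Real.sqrt_pos.mpr (hτ2 x)
    positivity
  have hgamma : 0 < Real.Gamma (((n : ℝ) - 1) / 2) := by
    apply Real.Gamma_pos_of_pos
    have : (2:ℝ) ≤ (n:ℝ) := by exact_mod_cast hn
    linarith
  have hconst : 0 < 2 * Real.pi * (Real.pi ^ (((n : ℝ) - 3) / 2) / Real.Gamma (((n : ℝ) - 1) / 2)) := by
    have := Real.rpow_pos_of_pos Real.pi_pos (((n : ℝ) - 3) / 2)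
    have hp := Real.pi_pos
    positivity
  exact mul_pos hconst hintpos

/-- Comparison (touching) principle for radial `s`-harmonic functions: if `u₁ ≥ u₂`, both
radially `s`-harmonic and continuous on `(0,∞)`, touch at one point, they coincide. -/
theorem stmt_10 (n : ℕ) (hn : 2 ≤ n) (s : ℝ) (hs : s ∈ Set.Ioo (0:ℝ) 1)
    (u₁ u₂ : ℝ → ℝ)
    (hcont₁ : ContinuousOn u₁ (Set.Ioi 0)) (hcont₂ : ContinuousOn u₂ (Set.Ioi 0))
    (hharm₁ : ∀ r > (0:ℝ),
      IntegrableOn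
        (fun τ : ℝ =>
          (u₁ r - u₁ (r * τ) + (u₁ r - u₁ (r / τ)) * τ ^ (2 * s - (n : ℝ))) *
            (τ * (τ ^ 2 - 1) ^ (-1 - 2 * s) * Hker n s τ))
        (Set.Ioi 1) ∧
      (∫ τ in Set.Ioi (1:ℝ),
          (u₁ r - u₁ (r * τ) + (u₁ r - u₁ (r / τ)) * τ ^ (2 * s - (n : ℝ))) *
            (τ * (τ ^ 2 - 1) ^ (-1 - 2 * s) * Hker n s τ)) = 0)
    (hharm₂ : ∀ r > (0:ℝ),
      IntegrableOn
        (fun τ : ℝ =>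
          (u₂ r - u₂ (r * τ) + (u₂ r - u₂ (r / τ)) * τ ^ (2 * s - (n : ℝ))) *
            (τ * (τ ^ 2 - 1) ^ (-1 - 2 * s) * Hker n s τ))
        (Set.Ioi 1) ∧
      (∫ τ in Set.Ioi (1:ℝ),
          (u₂ r - u₂ (r * τ) + (u₂ r - u₂ (r / τ)) * τ ^ (2 * s - (n : ℝ))) *
            (τ * (τ ^ 2 - 1) ^ (-1 - 2 * s) * Hker n s τ)) = 0)
    (hge : ∀ r > (0:ℝ), u₂ r ≤ u₁ r)
    (rb : ℝ) (hrb : 0 < rb) (htouch : u₁ rb = u₂ rb) :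
    ∀ r > (0:ℝ), u₁ r = u₂ r := by
  obtain ⟨hs0, hs1⟩ := hs
  have hkpos : ∀ τ : ℝ, 1 < τ → 0 < τ * (τ ^ 2 - 1) ^ (-1 - 2 * s) * Hker n s τ := by
    intro τ hτ
    have h2 : (0:ℝ) < τ ^ 2 - 1 := by nlinarith
    exact mul_pos (mul_pos (by linarith) (Real.rpow_pos_of_pos h2 _)) (Hker_pos n hn s hτ)
  set w : ℝ → ℝ := fun r => u₁ r - u₂ r with hw
  have hw0 : ∀ r, 0 < r → 0 ≤ w r := fun r hr => sub_nonneg.mpr (hge r hr)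
  have hwrb : w rb = 0 := sub_eq_zero.mpr htouch
  obtain ⟨hi₁, he₁⟩ := hharm₁ rb hrb
  obtain ⟨hi₂, he₂⟩ := hharm₂ rb hrb
  set F : ℝ → ℝ := fun τ =>
      (w rb - w (rb * τ) + (w rb - w (rb / τ)) * τ ^ (2 * s - (n : ℝ))) *
        (τ * (τ ^ 2 - 1) ^ (-1 - 2 * s) * Hker n s τ) with hF
  have hFeq : F = fun τ =>
      (u₁ rb - u₁ (rb * τ) + (u₁ rb - u₁ (rb / τ)) * τ ^ (2 * s - (n : ℝ))) *
        (τ * (τ ^ 2 - 1) ^ (-1 - 2 * s) * Hker n s τ) -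
      (u₂ rb - u₂ (rb * τ) + (u₂ rb - u₂ (rb / τ)) * τ ^ (2 * s - (n : ℝ))) *
        (τ * (τ ^ 2 - 1) ^ (-1 - 2 * s) * Hker n s τ) := by
    funext τ; simp only [hF, hw]; ring
  have hFint : IntegrableOn F (Set.Ioi 1) := by rw [hFeq]; exact hi₁.sub hi₂
  have hFzero : ∫ τ in Set.Ioi (1:ℝ), F τ = 0 := by
    simp only [hFeq]
    rw [integral_sub hi₁ hi₂, he₁, he₂, sub_zero]
  have hnonneg : ∀ τ ∈ Set.Ioi (1:ℝ), 0 ≤ -F τ := by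
    intro τ hτ
    have hτ1 : (1:ℝ) < τ := hτ
    have hτ0 : (0:ℝ) < τ := by linarith
    have h1 : 0 ≤ w (rb * τ) := hw0 _ (by positivity)
    have h2 : 0 ≤ w (rb / τ) := hw0 _ (by positivity)
    have h3 : (0:ℝ) < τ ^ (2 * s - (n : ℝ)) := Real.rpow_pos_of_pos hτ0 _
    have hk := hkpos τ hτ1
    simp only [hF, hwrb]
    have hnn := mul_nonneg (add_nonneg h1 (mul_nonneg h2 h3.le)) hk.le
    nlinarith [hnn]
  have haeF : F =ᵐ[volume.restrict (Set.Ioi (1:ℝ))] 0 := by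
    have hnn : 0 ≤ᵐ[volume.restrict (Set.Ioi (1:ℝ))] fun τ => -F τ := by
      rw [Filter.EventuallyLE, ae_restrict_iff' measurableSet_Ioi]
      exact Filter.Eventually.of_forall hnonneg
    have hz : (∫ τ in Set.Ioi (1:ℝ), -F τ) = 0 := by
      rw [integral_neg, hFzero, neg_zero]
    have := (integral_eq_zero_iff_of_nonneg_ae hnn hFint.neg).mp hz
    filter_upwards [this] with τ hτ
    simpa using hτ
  have hae : ∀ᵐ τ ∂(volume.restrict (Set.Ioi (1:ℝ))), w (rb * τ) = 0 ∧ w (rb / τ) = 0 := by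
    filter_upwards [haeF, ae_restrict_mem measurableSet_Ioi] with τ hFτ hτ
    have hτ1 : (1:ℝ) < τ := hτ
    have hτ0 : (0:ℝ) < τ := by linarith
    have h1 : 0 ≤ w (rb * τ) := hw0 _ (by positivity)
    have h2 : 0 ≤ w (rb / τ) := hw0 _ (by positivity)
    have h3 : (0:ℝ) < τ ^ (2 * s - (n : ℝ)) := Real.rpow_pos_of_pos hτ0 _
    have hk := hkpos τ hτ1
    have hFτ' : (w rb - w (rb * τ) + (w rb - w (rb / τ)) * τ ^ (2 * s - (n : ℝ))) *
        (τ * (τ ^ 2 - 1) ^ (-1 - 2 * s) * Hker n s τ) = 0 := hFτ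
    have hsum : w rb - w (rb * τ) + (w rb - w (rb / τ)) * τ ^ (2 * s - (n : ℝ)) = 0 := by
      rcases mul_eq_zero.mp hFτ' with h | h
      · exact h
      · exact absurd h (ne_of_gt hk)
    rw [hwrb] at hsum
    have hmn := mul_nonneg h2 h3.le
    set a := w (rb * τ) with ha
    set b := w (rb / τ) with hb
    set p := τ ^ (2 * s - (n : ℝ)) with hp
    have hsum' : a + b * p = 0 := by linarith [hsum]
    have hbp : b * p = 0 := by linarith
    refine ⟨by linarith, ?_⟩
    exact (mul_eq_zero.mp hbp).resolve_right (ne_of_gt h3)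
  have hwcont : ContinuousOn w (Set.Ioi (0:ℝ)) := hcont₁.sub hcont₂
  have hmaps1 : Set.MapsTo (fun τ : ℝ => rb * τ) (Set.Ioi 1) (Set.Ioi 0) := by
    intro τ hτ
    have : (1:ℝ) < τ := hτ
    exact Set.mem_Ioi.mpr (by positivity)
  have hmaps2 : Set.MapsTo (fun τ : ℝ => rb / τ) (Set.Ioi 1) (Set.Ioi 0) := by
    intro τ hτ
    have hτ0 : (0:ℝ) < τ := lt_trans one_pos hτ
    exact Set.mem_Ioi.mpr (by positivity)
  have hg1 : ContinuousOn (fun τ : ℝ => w (rb * τ)) (Set.Ioi 1) :=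
    hwcont.comp (continuous_const.mul continuous_id).continuousOn hmaps1
  have hg2 : ContinuousOn (fun τ : ℝ => w (rb / τ)) (Set.Ioi 1) := by
    apply hwcont.comp _ hmaps2
    exact ContinuousOn.div continuousOn_const continuousOn_id
      (fun τ hτ => ne_of_gt (lt_trans one_pos hτ))
  have hsub : Set.Ioi (1:ℝ) ⊆ closure (interior (Set.Ioi (1:ℝ))) := by
    rw [interior_Ioi]; exact subset_closure
  have h1ae : (fun τ : ℝ => w (rb * τ)) =ᵐ[volume.restrict (Set.Ioi (1:ℝ))] (0 : ℝ → ℝ) := by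
    filter_upwards [hae] with τ hτ
    exact hτ.1
  have h2ae : (fun τ : ℝ => w (rb / τ)) =ᵐ[volume.restrict (Set.Ioi (1:ℝ))] (0 : ℝ → ℝ) := by
    filter_upwards [hae] with τ hτ
    exact hτ.2
  have hEq1 : Set.EqOn (fun τ : ℝ => w (rb * τ)) 0 (Set.Ioi 1) :=
    Measure.eqOn_of_ae_eq h1ae hg1 continuousOn_const hsub
  have hEq2 : Set.EqOn (fun τ : ℝ => w (rb / τ)) 0 (Set.Ioi 1) :=
    Measure.eqOn_of_ae_eq h2ae hg2 continuousOn_const hsub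
  intro r hr
  have hwr : w r = 0 := by
    rcases lt_trichotomy r rb with h | h | h
    · have hτ : (1:ℝ) < rb / r := (one_lt_div hr).mpr h
      have := hEq2 (Set.mem_Ioi.mpr hτ)
      simp only [Pi.zero_apply] at this
      have heq : rb / (rb / r) = r := by field_simp
      rwa [heq] at this
    · rw [h]; exact hwrb
    · have hτ : (1:ℝ) < r / rb := (one_lt_div hrb).mpr h
      have := hEq1 (Set.mem_Ioi.mpr hτ)
      simp only [Pi.zero_apply] at this
      have heq : rb * (r / rb) = r := by field_simp
      rwa [heq] at this
  have : u₁ r - u₂ r = 0 := hwr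
  linarith
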